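/- arXiv:2302.03913 — 4 statements merged into one kernel-verified Lean document; each statement's English description precedes it below -/
import Mathlib

section
/- Let X be a finite set and ≻ a strict linear order on X. Define ρ^≻(D, x) = 1 if x ≻ y for all y ∈ D∖{x}, and 0 otherwise. Then for every x ∈ D ⊆ X with D nonempty, the Block–Marschak polynomial K(ρ^≻, D, x) equals 1 if (y ≻ x for all y ∈ X∖D and x ≻ y for all y ∈ D∖{x}), and 0 otherwise. -/
open Finset

variable {α : Type*} [Fintype α] [LinearOrder α]

/-- The Block–Marschak polynomial `K(ρ, D, x) = ∑_{E ⊇ D} (-1)^{|E \ D|} ρ(E, x)`. -/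
noncomputable def bmK (ρ : Finset α → α → ℝ) (D : Finset α) (x : α) : ℝ :=
  ∑ E : Finset α, if D ⊆ E then (-1 : ℝ) ^ (E \ D).card * ρ E x else 0

/-- The deterministic stochastic choice function induced by the strict linear order `>`:
`ρ^≻(D,x) = 1` if `x ≻ y` for all `y ∈ D∖{x}`, and `0` otherwise. -/
noncomputable def rhoOrd (D : Finset α) (x : α) : ℝ :=
  if ∀ y ∈ D, y ≠ x → x > y then 1 else 0

lemma real_sum_powerset {β : Type*} [DecidableEq β] (A : Finset β) :
    (∑ S ∈ A.powerset, (-1 : ℝ) ^ S.card) = if A = ∅ then 1 else 0 := by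
  have h := Finset.sum_powerset_neg_one_pow_card (x := A)
  have : ((∑ S ∈ A.powerset, (-1 : ℤ) ^ S.card : ℤ) : ℝ)
      = ∑ S ∈ A.powerset, (-1 : ℝ) ^ S.card := by push_cast; rfl
  rw [← this, h]
  split <;> simp

/-- `K(ρ^≻, D, x)` equals the indicator that everything outside `D` beats `x` and
`x` beats everything else in `D`. -/
theorem stmt_2 (D : Finset α) (x : α) (hD : D.Nonempty) (hx : x ∈ D) :
    bmK rhoOrd D x =
      if (∀ y, y ∉ D → y > x) ∧ (∀ y ∈ D, y ≠ x → x > y) then 1 else 0 := by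
  classical
  -- reindex: sum over S ⊆ univ \ D, with E = D ∪ S
  have key : bmK rhoOrd D x
      = ∑ S ∈ (univ \ D).powerset, (-1 : ℝ) ^ S.card * rhoOrd (D ∪ S) x := by
    unfold bmK
    rw [← Finset.sum_filter]
    refine Finset.sum_nbij' (fun E => E \ D) (fun S => D ∪ S) ?_ ?_ ?_ ?_ ?_
    · intro E hE
      simp only [mem_filter, mem_univ, true_and] at hE
      simp [Finset.mem_powerset, Finset.sdiff_subset_sdiff (Finset.subset_univ E) le_rfl]
    · intro S hS
      simp only [Finset.mem_powerset] at hS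
      simp [Finset.mem_filter]
    · intro E hE
      simp only [mem_filter, mem_univ, true_and] at hE
      exact Finset.union_sdiff_of_subset hE
    · intro S hS
      simp only [Finset.mem_powerset] at hS
      have hdisj : Disjoint D S := by
        refine Finset.disjoint_left.2 fun a ha haS => ?_
        exact (Finset.mem_sdiff.1 (hS haS)).2 ha
      show (D ∪ S) \ D = S
      exact Finset.union_sdiff_cancel_left hdisj
    · intro E hE
      simp only [mem_filter, mem_univ, true_and] at hE
      rw [Finset.union_sdiff_of_subset hE]
  -- rhoOrd (D ∪ S) x splits
  set L : Finset α := (univ \ D).filter (fun y => y < x) with hL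
  have rho_eq : ∀ S ∈ (univ \ D).powerset,
      rhoOrd (D ∪ S) x = rhoOrd D x * (if S ⊆ L then 1 else 0) := by
    intro S hS
    simp only [Finset.mem_powerset] at hS
    unfold rhoOrd
    by_cases hmax : ∀ y ∈ D, y ≠ x → x > y
    · rw [if_pos hmax, one_mul]
      by_cases hSL : S ⊆ L
      · rw [if_pos, if_pos hSL]
        intro y hy hyx
        rcases Finset.mem_union.1 hy with h | h
        · exact hmax y h hyx
        · exact (Finset.mem_filter.1 (hSL h)).2
      · rw [if_neg, if_neg hSL]
        intro hall
        apply hSL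
        intro y hy
        have hyD : y ∉ D := by
          have := hS hy; simpa [Finset.mem_sdiff] using this
        have hyx : y ≠ x := fun h => hyD (h ▸ hx)
        exact Finset.mem_filter.2 ⟨hS hy, hall y (Finset.mem_union_right _ hy) hyx⟩
    · have hno : ¬ ∀ y ∈ D ∪ S, y ≠ x → x > y := by
        intro hall
        exact hmax fun y hy => hall y (Finset.mem_union_left _ hy)
      rw [if_neg hno, if_neg hmax, zero_mul]
  rw [key, Finset.sum_congr rfl fun S hS => by rw [rho_eq S hS]]
  have : ∑ S ∈ (univ \ D).powerset, (-1 : ℝ) ^ S.card * (rhoOrd D x * (if S ⊆ L then 1 else 0))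
      = rhoOrd D x * ∑ S ∈ L.powerset, (-1 : ℝ) ^ S.card := by
    rw [Finset.mul_sum]
    have hset : L.powerset = (univ \ D).powerset.filter (fun S => S ⊆ L) := by
      ext S
      simp only [Finset.mem_filter, Finset.mem_powerset]
      constructor
      · intro h
        refine ⟨h.trans ?_, h⟩
        rw [hL]; exact Finset.filter_subset _ _
      · exact fun h => h.2
    rw [hset, Finset.sum_filter]
    apply Finset.sum_congr rfl
    intro S hS
    by_cases hSL : S ⊆ L <;> simp [hSL] <;> ring
  rw [this, real_sum_powerset]
  have hLempty : (L = ∅) ↔ ∀ y, y ∉ D → y > x := by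
    constructor
    · intro h y hy
      rcases lt_trichotomy y x with hlt | heq | hgt
      · exfalso
        have : y ∈ L := Finset.mem_filter.2 ⟨Finset.mem_sdiff.2 ⟨Finset.mem_univ _, hy⟩, hlt⟩
        simp [h] at this
      · exact absurd (heq ▸ hx) hy
      · exact hgt
    · intro h
      ext y
      simp only [hL, Finset.mem_filter, Finset.mem_sdiff, Finset.mem_univ, true_and,
        Finset.notMem_empty, iff_false]
      rintro ⟨hyD, hlt⟩
      exact absurd (h y hyD) (not_lt.2 hlt.le)
  unfold rhoOrd
  by_cases h1 : ∀ y ∈ D, y ≠ x → x > y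
  · by_cases h2 : ∀ y, y ∉ D → y > x
    · rw [if_pos h1, if_pos (hLempty.2 h2), if_pos ⟨h2, h1⟩]; ring
    · rw [if_pos h1, if_neg (fun h => h2 (hLempty.1 h)), if_neg (fun h => h2 h.1)]; ring
  · rw [if_neg h1, zero_mul, if_neg (fun h : _ ∧ _ => h1 h.2)]
end

section
/- Let X be a finite set and ≻ a strict linear order on X. Define ρ^≻(D,x) = 1 if x is the ≻-maximum of D and 0 otherwise. Then for every x ∈ D ⊆ X (D nonempty), K(ρ^≻, D, x) ≥ 0, and K(ρ^≻, D, x) = 0 whenever there exists y ∈ D∖{x} with y ≻ x. -/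
open Finset

variable {α : Type*} [Fintype α] [LinearOrder α]

/-- `K(ρ^≻, D, x) ≥ 0`, and it vanishes whenever some `y ∈ D∖{x}` beats `x`. -/
theorem stmt_3 (D : Finset α) (x : α) (hD : D.Nonempty) (hx : x ∈ D) :
    0 ≤ bmK rhoOrd D x ∧
      ((∃ y ∈ D, y ≠ x ∧ y > x) → bmK rhoOrd D x = 0) := by
  classical
  by_cases hbad : ∃ y ∈ D, y ≠ x ∧ y > x
  · have hzero : bmK rhoOrd D x = 0 := by
      unfold bmK
      refine Finset.sum_eq_zero fun E _ ↦ ?_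
      split_ifs with hDE
      · obtain ⟨y, hyD, hyx, hygt⟩ := hbad
        have : rhoOrd E x = 0 := by
          unfold rhoOrd
          rw [if_neg]
          intro h
          exact absurd (h y (hDE hyD) hyx) (not_lt.2 hygt.le)
        rw [this, mul_zero]
      · rfl
    exact ⟨hzero.ge, fun _ ↦ hzero⟩
  · -- x is the maximum of D
    have hmax : ∀ y ∈ D, y ≤ x := by
      intro y hy
      by_contra h
      exact hbad ⟨y, hy, fun he ↦ h (he ▸ le_refl x), lt_of_not_ge h⟩
    set S : Finset α := Finset.univ.filter (· ≤ x) with hS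
    have hDS : D ⊆ S := fun y hy ↦ by simp [hS, hmax y hy]
    have hrho : ∀ E : Finset α, rhoOrd E x = if E ⊆ S then 1 else 0 := by
      intro E
      unfold rhoOrd
      congr 1
      simp only [eq_iff_iff]
      constructor
      · intro h y hy
        simp only [hS, mem_filter, mem_univ, true_and]
        rcases eq_or_ne y x with rfl | hne
        · exact le_rfl
        · exact (h y hy hne).le
      · intro h y hy hne
        have := h hy
        simp only [hS, mem_filter, mem_univ, true_and] at this
        exact lt_of_le_of_ne this hne
    have key : bmK rhoOrd D x = ∑ F ∈ (S \ D).powerset, (-1 : ℝ) ^ F.card := by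
      unfold bmK
      rw [show (∑ E : Finset α, if D ⊆ E then (-1 : ℝ) ^ (E \ D).card * rhoOrd E x else 0)
          = ∑ E ∈ Finset.univ.filter (fun E : Finset α ↦ D ⊆ E ∧ E ⊆ S),
              (-1 : ℝ) ^ (E \ D).card from ?_]
      · refine Finset.sum_nbij' (fun E ↦ E \ D) (fun F ↦ F ∪ D) ?_ ?_ ?_ ?_ ?_
        · intro E hE
          simp only [mem_filter, mem_univ, true_and] at hE
          exact mem_powerset.2 (sdiff_subset_sdiff hE.2 le_rfl)
        · intro F hF
          simp only [mem_powerset] at hF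
          simp only [mem_filter, mem_univ, true_and]
          refine ⟨subset_union_right, union_subset (hF.trans sdiff_subset) hDS⟩
        · intro E hE
          simp only [mem_filter, mem_univ, true_and] at hE
          exact sdiff_union_of_subset hE.1
        · intro F hF
          simp only [mem_powerset] at hF
          have : Disjoint F D := disjoint_of_subset_left hF sdiff_disjoint
          exact union_sdiff_cancel_right this
        · intro E _; rfl
      · rw [Finset.sum_filter]
        refine Finset.sum_congr rfl fun E _ ↦ ?_
        rw [hrho E]
        by_cases h1 : D ⊆ E <;> by_cases h2 : E ⊆ S <;> simp [h1, h2]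
    have hval : (∑ F ∈ (S \ D).powerset, (-1 : ℝ) ^ F.card)
        = if S \ D = ∅ then 1 else 0 := by
      have := Finset.sum_powerset_neg_one_pow_card (x := S \ D)
      have h2 : ((∑ m ∈ (S \ D).powerset, (-1 : ℤ) ^ m.card : ℤ) : ℝ)
          = ∑ F ∈ (S \ D).powerset, (-1 : ℝ) ^ F.card := by push_cast; rfl
      rw [← h2, this]
      split_ifs <;> norm_num
    refine ⟨?_, fun h ↦ absurd h hbad⟩
    rw [key, hval]
    split_ifs <;> norm_num
end

section
/- Let (𝒩, 𝒜) be a finite directed network with distinguished distinct nodes s and t, and let l, u : 𝒜 → ℝ₊ with l(D,E) ≤ u(D,E) for all arcs. There exists a flow f : 𝒜 → ℝ₊ (satisfying net outflow 1 at s, flow conservation at all other nodes except t, and net inflow 1 at t) with l(a) ≤ f(a) ≤ u(a) for all arcs a, if and only if for every subset 𝒞 ⊆ 𝒩: Σ_{(D,E)∈𝒞×𝒞ᶜ, (D,E)∈𝒜} u(D,E) − Σ_{(D,E)∈𝒞ᶜ×𝒞, (D,E)∈𝒜} l(D,E) ≥ 1 if s ∈ 𝒞 and t ∉ 𝒞;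 ≥ −1 if t ∈ 𝒞 and s ∉ 𝒞; and ≥ 0 otherwise. -/
open Finset

private lemma layerSum' (L : List ℝ) (hsort : L.Pairwise (· < ·)) (x z : ℝ) (hx : x ∈ L) (hz : z ∈ L) :
    max (x - z) 0 = ∑ k ∈ Finset.range (L.length - 1),
      (L.getD (k+1) 0 - L.getD k 0) * (if L.getD k 0 < x ∧ ¬ (L.getD k 0 < z) then 1 else 0) := by
  set n := L.length with hn
  set g : ℕ → ℝ := fun k => L.getD k 0 with hg
  have hget : ∀ k (h : k < n), g k = L[k] := fun k h => List.getD_eq_getElem L 0 h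
  have hstrict : ∀ i j, i < j → j < n → g i < g j := by
    intro i j hij hj
    rw [hget i (hij.trans hj), hget j hj]
    exact List.pairwise_iff_getElem.1 hsort i j (hij.trans hj) hj hij
  have hmono : ∀ i j, i ≤ j → j < n → g i ≤ g j := by
    intro i j hij hj
    rcases eq_or_lt_of_le hij with h | h
    · rw [h]
    · exact (hstrict i j h hj).le
  obtain ⟨ix, hix, hgx⟩ := List.mem_iff_getElem.1 hx
  obtain ⟨iz, hiz, hgz⟩ := List.mem_iff_getElem.1 hz
  rw [← hget ix hix] at hgx
  rw [← hget iz hiz] at hgz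
  have hcomp : ∀ (w : ℝ) (iw : ℕ), iw < n → g iw = w → ∀ k, k < n → (g k < w ↔ k < iw) := by
    intro w iw hiw hgw k hk
    constructor
    · intro h
      by_contra hc
      exact absurd (hmono iw k (not_lt.1 hc) hk) (by rw [hgw]; linarith)
    · intro h
      rw [← hgw]; exact hstrict k iw h hiw
  have step : ∀ k ∈ Finset.range (n - 1),
      (g (k+1) - g k) * (if g k < x ∧ ¬ (g k < z) then 1 else 0)
        = if k ∈ Finset.Ico iz ix then (g (k+1) - g k) else 0 := by
    intro k hk
    rw [Finset.mem_range] at hk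
    have hkn : k < n := by omega
    have h1 := hcomp x ix hix hgx k hkn
    have h2 := hcomp z iz hiz hgz k hkn
    have : (g k < x ∧ ¬ (g k < z)) ↔ k ∈ Finset.Ico iz ix := by
      rw [h1, h2, Finset.mem_Ico, not_lt]
      tauto
    rw [if_congr this rfl rfl]
    split_ifs <;> ring
  rw [Finset.sum_congr rfl step, Finset.sum_ite_mem,
    Finset.inter_eq_right.mpr (by intro k hk; rw [Finset.mem_Ico] at hk; rw [Finset.mem_range]; omega)]
  by_cases hle : iz ≤ ix
  · rw [Finset.sum_Ico_eq_sub _ hle, Finset.sum_range_sub g, Finset.sum_range_sub g]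
    have : z ≤ x := by rw [← hgx, ← hgz]; exact hmono iz ix hle hix
    rw [max_eq_left (by linarith), ← hgx, ← hgz]
    ring
  · rw [Finset.Ico_eq_empty (by omega), Finset.sum_empty]
    have : x < z := by rw [← hgx, ← hgz]; exact hstrict ix iz (by omega) hiz
    rw [max_eq_right (by linarith)]

private def netMap' {V : Type*} [Fintype V] [DecidableEq V] (A : Finset (V × V)) :
    (V × V → ℝ) →ₗ[ℝ] (V → ℝ) where
  toFun f := fun D => (∑ a ∈ A.filter (fun a => a.1 = D), f a)
      - (∑ a ∈ A.filter (fun a => a.2 = D), f a)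
  map_add' f g := by
    funext D
    simp only [Pi.add_apply, Finset.sum_add_distrib]
    ring
  map_smul' c f := by
    funext D
    simp only [Pi.smul_apply, smul_eq_mul, RingHom.id_apply, ← Finset.mul_sum]
    ring

private lemma netMap'_apply {V : Type*} [Fintype V] [DecidableEq V] (A : Finset (V × V))
    (f : V × V → ℝ) (D : V) :
    netMap' A f D = (∑ a ∈ A.filter (fun a => a.1 = D), f a)
      - (∑ a ∈ A.filter (fun a => a.2 = D), f a) := rfl

private lemma pairing' {V : Type*} [Fintype V] [DecidableEq V] (A : Finset (V × V))
    (y : V → ℝ) (f : V × V → ℝ) :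
    ∑ D, y D * (netMap' A f D) = ∑ a ∈ A, (y a.1 - y a.2) * f a := by
  simp only [netMap'_apply, mul_sub, Finset.mul_sum, Finset.sum_sub_distrib, sub_mul]
  congr 1
  · rw [← Finset.sum_fiberwise A Prod.fst (fun a => y a.1 * f a)]
    refine Finset.sum_congr rfl fun D _ => Finset.sum_congr rfl fun a ha => ?_
    rw [(Finset.mem_filter.1 ha).2]
  · rw [← Finset.sum_fiberwise A Prod.snd (fun a => y a.2 * f a)]
    refine Finset.sum_congr rfl fun D _ => Finset.sum_congr rfl fun a ha => ?_
    rw [(Finset.mem_filter.1 ha).2]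

/-- Feasibility theorem for flows with lower and upper capacity bounds on a finite
directed network `(V, A)` with source `s` and sink `t`. -/
theorem stmt_5 {V : Type*} [Fintype V] [DecidableEq V]
    (A : Finset (V × V)) (s t : V) (hst : s ≠ t)
    (l u : V × V → ℝ) (hl0 : ∀ a ∈ A, 0 ≤ l a) (hlu : ∀ a ∈ A, l a ≤ u a) :
    (∃ f : V × V → ℝ,
      (∀ a ∈ A, 0 ≤ f a) ∧
      (∀ a ∈ A, l a ≤ f a ∧ f a ≤ u a) ∧
      (∑ a ∈ A.filter (fun a => a.1 = s), f a)
        - (∑ a ∈ A.filter (fun a => a.2 = s), f a) = 1 ∧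
      (∀ D : V, D ≠ s → D ≠ t →
        (∑ a ∈ A.filter (fun a => a.1 = D), f a)
          = ∑ a ∈ A.filter (fun a => a.2 = D), f a) ∧
      (∑ a ∈ A.filter (fun a => a.2 = t), f a)
        - (∑ a ∈ A.filter (fun a => a.1 = t), f a) = 1) ↔
    (∀ C : Finset V,
      (∑ a ∈ A.filter (fun a => a.1 ∈ C ∧ a.2 ∉ C), u a)
        - (∑ a ∈ A.filter (fun a => a.1 ∉ C ∧ a.2 ∈ C), l a) ≥
      (if s ∈ C ∧ t ∉ C then 1 else if t ∈ C ∧ s ∉ C then -1 else 0)) := by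
  constructor
  · -- forward: flow exists → cut conditions
    rintro ⟨f, hf0, hbound, hscond, hcons, htcond⟩ C
    have hφ : ∀ D : V, (∑ a ∈ A.filter (fun a => a.1 = D), f a)
        - (∑ a ∈ A.filter (fun a => a.2 = D), f a)
        = if D = s then 1 else if D = t then (-1 : ℝ) else 0 := by
      intro D
      by_cases h1 : D = s
      · subst h1; rw [if_pos rfl]; exact hscond
      · by_cases h2 : D = t
        · subst h2; rw [if_neg h1, if_pos rfl]; linarith [htcond]
        · rw [if_neg h1, if_neg h2, sub_eq_zero]; exact hcons D h1 h2
    have key : (∑ a ∈ A.filter (fun a => a.1 ∈ C ∧ a.2 ∉ C), f a)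
        - (∑ a ∈ A.filter (fun a => a.1 ∉ C ∧ a.2 ∈ C), f a)
        = ∑ D ∈ C, ((∑ a ∈ A.filter (fun a => a.1 = D), f a)
          - (∑ a ∈ A.filter (fun a => a.2 = D), f a)) := by
      rw [Finset.sum_sub_distrib,
        Finset.sum_fiberwise_eq_sum_filter A C Prod.fst f,
        Finset.sum_fiberwise_eq_sum_filter A C Prod.snd f]
      have h1 : ∑ a ∈ A.filter (fun a => a.1 ∈ C), f a
          = ∑ a ∈ A.filter (fun a => a.1 ∈ C ∧ a.2 ∈ C), f a
            + ∑ a ∈ A.filter (fun a => a.1 ∈ C ∧ a.2 ∉ C), f a := by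
        rw [← Finset.sum_filter_add_sum_filter_not (A.filter (fun a => a.1 ∈ C))
          (fun a => a.2 ∈ C) f, Finset.filter_filter, Finset.filter_filter]
      have h2 : ∑ a ∈ A.filter (fun a => a.2 ∈ C), f a
          = ∑ a ∈ A.filter (fun a => a.1 ∈ C ∧ a.2 ∈ C), f a
            + ∑ a ∈ A.filter (fun a => a.1 ∉ C ∧ a.2 ∈ C), f a := by
        rw [← Finset.sum_filter_add_sum_filter_not (A.filter (fun a => a.2 ∈ C))
          (fun a => a.1 ∈ C) f, Finset.filter_filter, Finset.filter_filter]
        congr 1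
        · exact Finset.sum_congr (Finset.filter_congr (by intro a _; tauto)) (fun _ _ => rfl)
        · exact Finset.sum_congr (Finset.filter_congr (by intro a _; tauto)) (fun _ _ => rfl)
      linarith
    have hval : ∑ D ∈ C, ((∑ a ∈ A.filter (fun a => a.1 = D), f a)
          - (∑ a ∈ A.filter (fun a => a.2 = D), f a))
        = (if s ∈ C ∧ t ∉ C then (1:ℝ) else if t ∈ C ∧ s ∉ C then -1 else 0) := by
      rw [Finset.sum_congr rfl (fun D _ => hφ D)]
      have : ∀ D : V, (if D = s then (1:ℝ) else if D = t then -1 else 0)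
          = (if D = s then (1:ℝ) else 0) + (if D = t then (-1:ℝ) else 0) := by
        intro D
        by_cases h1 : D = s
        · subst h1; simp [hst]
        · simp [h1]
      rw [Finset.sum_congr rfl (fun D _ => this D), Finset.sum_add_distrib,
        Finset.sum_ite_eq' C s (fun _ => (1:ℝ)), Finset.sum_ite_eq' C t (fun _ => (-1:ℝ))]
      by_cases h1 : s ∈ C <;> by_cases h2 : t ∈ C <;> simp [h1, h2, hst]
    have e1 : ∑ a ∈ A.filter (fun a => a.1 ∈ C ∧ a.2 ∉ C), f a
        ≤ ∑ a ∈ A.filter (fun a => a.1 ∈ C ∧ a.2 ∉ C), u a :=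
      Finset.sum_le_sum fun a ha => (hbound a (Finset.mem_filter.1 ha).1).2
    have e2 : ∑ a ∈ A.filter (fun a => a.1 ∉ C ∧ a.2 ∈ C), l a
        ≤ ∑ a ∈ A.filter (fun a => a.1 ∉ C ∧ a.2 ∈ C), f a :=
      Finset.sum_le_sum fun a ha => (hbound a (Finset.mem_filter.1 ha).1).1
    linarith [key, hval, e1, e2]
  · -- backward: cut conditions → flow exists
    intro hcut
    by_contra hflow
    set B : Set (V × V → ℝ) :=
      Set.univ.pi (fun a => if a ∈ A then Set.Icc (l a) (u a) else {0}) with hBdef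
    have hBconv : Convex ℝ B := convex_pi (fun a _ => by
      split_ifs
      · exact convex_Icc _ _
      · exact convex_singleton _)
    have hBcomp : IsCompact B := isCompact_univ_pi (fun a => by
      split_ifs
      · exact isCompact_Icc
      · exact isCompact_singleton)
    set S : Set (V → ℝ) := (netMap' A) '' B with hSdef
    have hScomp : IsCompact S := hBcomp.image (netMap' A).continuous_of_finiteDimensional
    have hSconv : Convex ℝ S := hBconv.linear_image _
    set b : V → ℝ := fun D => if D = s then 1 else if D = t then -1 else 0 with hbdef
    have hbS : b ∉ S := by
      rintro ⟨f, hfB, hfb⟩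
      apply hflow
      refine ⟨f, ?_, ?_, ?_, ?_, ?_⟩
      · intro a ha
        have h := hfB a (Set.mem_univ a)
        simp only [ha, if_true] at h
        exact le_trans (hl0 a ha) h.1
      · intro a ha
        have h := hfB a (Set.mem_univ a)
        simp only [ha, if_true] at h
        exact ⟨h.1, h.2⟩
      · have h := congrFun hfb s
        rw [netMap'_apply] at h
        simpa [hbdef] using h
      · intro D hDs hDt
        have h := congrFun hfb D
        rw [netMap'_apply] at h
        simp only [hbdef] at h
        simp only [hDs, hDt, if_false] at h
        linarith
      · have h := congrFun hfb t
        rw [netMap'_apply] at h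
        simp only [hbdef] at h
        simp only [Ne.symm hst, if_false, if_true] at h
        linarith
    obtain ⟨gsep, c, hc1, hc2⟩ :=
      geometric_hahn_banach_closed_point hSconv hScomp.isClosed hbS
    set y : V → ℝ := fun D => gsep (Pi.single D 1) with hydef
    have hrep : ∀ x : V → ℝ, gsep x = ∑ D, x D * y D := by
      intro x
      have hx : x = ∑ D, x D • (Pi.single D 1 : V → ℝ) := by
        funext j
        simp [Finset.sum_apply, Pi.single_apply]
      conv_lhs => rw [hx]
      rw [map_sum]
      simp [hydef, smul_eq_mul]
    have hgb : gsep b = y s - y t := by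
      rw [hrep]
      have : ∀ D : V, b D * y D
          = (if D = s then y s else 0) + (if D = t then -(y t) else 0) := by
        intro D
        by_cases h1 : D = s
        · subst h1; simp [hbdef, hst]
        · by_cases h2 : D = t
          · subst h2; simp [hbdef, h1]
          · simp [hbdef, h1, h2]
      rw [Finset.sum_congr rfl (fun D _ => this D), Finset.sum_add_distrib,
        Finset.sum_ite_eq' Finset.univ s (fun _ => y s),
        Finset.sum_ite_eq' Finset.univ t (fun _ => -(y t))]
      simp
      ring
    -- sorted value list
    set T : Finset ℝ := Finset.image y Finset.univ with hTdef
    set L : List ℝ := T.sort (· ≤ ·) with hLdef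
    have hsort : L.Pairwise (· < ·) := T.sortedLT_sort.pairwise
    set n : ℕ := L.length with hndef
    set g : ℕ → ℝ := fun k => L.getD k 0 with hgdef
    have hmemL : ∀ v : V, y v ∈ L := fun v =>
      (Finset.mem_sort _).2 (Finset.mem_image_of_mem y (Finset.mem_univ v))
    have hnpos : 0 < n := List.length_pos_iff.2 (List.ne_nil_of_mem (hmemL s))
    have hgetg : ∀ k (h : k < n), g k = L[k] := fun k h => List.getD_eq_getElem L 0 h
    have hstrict : ∀ i j, i < j → j < n → g i < g j := by
      intro i j hij hj
      rw [hgetg i (hij.trans hj), hgetg j hj]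
      exact List.pairwise_iff_getElem.1 hsort i j (hij.trans hj) hj hij
    have hmono : ∀ i j, i ≤ j → j < n → g i ≤ g j := by
      intro i j hij hj
      rcases eq_or_lt_of_le hij with h | h
      · rw [h]
      · exact (hstrict i j h hj).le
    have hming : ∀ w ∈ L, g 0 ≤ w := by
      intro w hw
      obtain ⟨i, hi, hgi⟩ := List.mem_iff_getElem.1 hw
      rw [← hgi, ← hgetg i hi]
      exact hmono 0 i (Nat.zero_le i) hi
    obtain ⟨v0, hv0⟩ : ∃ v0 : V, y v0 = g 0 := by
      have hg0L : g 0 ∈ L := by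
        rw [hgetg 0 hnpos]
        exact List.getElem_mem _
      have : g 0 ∈ T := (Finset.mem_sort _).1 hg0L
      obtain ⟨v0, _, hv0⟩ := Finset.mem_image.1 this
      exact ⟨v0, hv0⟩
    -- the extremal box point
    set fstar : V × V → ℝ :=
      fun a => if a ∈ A then (if 0 ≤ y a.1 - y a.2 then u a else l a) else 0 with hfsdef
    have hfstarB : fstar ∈ B := by
      intro a _
      simp only [hfsdef]
      by_cases ha : a ∈ A
      · rw [if_pos ha, if_pos ha]
        by_cases hd : 0 ≤ y a.1 - y a.2
        · rw [if_pos hd]; exact ⟨hlu a ha, le_refl _⟩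
        · rw [if_neg hd]; exact ⟨le_refl _, hlu a ha⟩
      · rw [if_neg ha, if_neg ha]; rfl
    have hlt : gsep (netMap' A fstar) < c := hc1 _ ⟨fstar, hfstarB, rfl⟩
    have hcltb : c < y s - y t := by rw [← hgb]; exact hc2
    -- compute gsep (netMap' A fstar)
    have hcalc : gsep (netMap' A fstar)
        = ∑ a ∈ A, (max (y a.1 - y a.2) 0 * u a - max (y a.2 - y a.1) 0 * l a) := by
      rw [hrep]
      rw [show ∑ D, (netMap' A fstar) D * y D = ∑ D, y D * (netMap' A fstar) D from
        Finset.sum_congr rfl (fun D _ => mul_comm _ _)]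
      rw [pairing' A y fstar]
      refine Finset.sum_congr rfl fun a ha => ?_
      simp only [hfsdef, if_pos ha]
      rcases le_or_gt 0 (y a.1 - y a.2) with h | h
      · rw [if_pos h, max_eq_left h, max_eq_right (by linarith)]; ring
      · rw [if_neg (not_le.2 h), max_eq_right h.le, max_eq_left (by linarith)]; ring
    -- layered form
    have hlayer : ∑ a ∈ A, (max (y a.1 - y a.2) 0 * u a - max (y a.2 - y a.1) 0 * l a)
        = ∑ k ∈ Finset.range (n - 1), (g (k+1) - g k) *
            ((∑ a ∈ A.filter (fun a => g k < y a.1 ∧ ¬ (g k < y a.2)), u a)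
              - (∑ a ∈ A.filter (fun a => ¬ (g k < y a.1) ∧ g k < y a.2), l a)) := by
      have h1 : ∀ a ∈ A, max (y a.1 - y a.2) 0 * u a - max (y a.2 - y a.1) 0 * l a
          = ∑ k ∈ Finset.range (n - 1), ((g (k+1) - g k) *
              (if g k < y a.1 ∧ ¬ (g k < y a.2) then 1 else 0) * u a
            - (g (k+1) - g k) * (if g k < y a.2 ∧ ¬ (g k < y a.1) then 1 else 0) * l a) := by
        intro a _
        rw [layerSum' L hsort (y a.1) (y a.2) (hmemL _) (hmemL _),
          layerSum' L hsort (y a.2) (y a.1) (hmemL _) (hmemL _)]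
        rw [Finset.sum_mul, Finset.sum_mul, ← Finset.sum_sub_distrib]
      rw [Finset.sum_congr rfl h1, Finset.sum_comm]
      refine Finset.sum_congr rfl fun k _ => ?_
      rw [Finset.sum_sub_distrib, mul_sub, Finset.mul_sum, Finset.mul_sum,
        Finset.sum_filter, Finset.sum_filter]
      congr 1
      · refine Finset.sum_congr rfl fun a _ => ?_
        split_ifs <;> ring
      · refine Finset.sum_congr rfl fun a _ => ?_
        have : (¬ (g k < y a.1) ∧ g k < y a.2) ↔ (g k < y a.2 ∧ ¬ (g k < y a.1)) := by tauto
        rw [if_congr this rfl rfl]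
        split_ifs <;> ring
    -- apply the cut hypothesis at each level
    have hcut' : ∀ k ∈ Finset.range (n - 1),
        (g (k+1) - g k) * (if g k < y s ∧ ¬ (g k < y t) then (1:ℝ)
            else if g k < y t ∧ ¬ (g k < y s) then -1 else 0)
          ≤ (g (k+1) - g k) *
            ((∑ a ∈ A.filter (fun a => g k < y a.1 ∧ ¬ (g k < y a.2)), u a)
              - (∑ a ∈ A.filter (fun a => ¬ (g k < y a.1) ∧ g k < y a.2), l a)) := by
      intro k hk
      rw [Finset.mem_range] at hk
      have hw : 0 ≤ g (k+1) - g k :=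
        sub_nonneg.2 (hmono k (k+1) (Nat.le_succ k) (by omega))
      refine mul_le_mul_of_nonneg_left ?_ hw
      have := hcut (Finset.univ.filter (fun v => g k < y v))
      simpa only [Finset.mem_filter, Finset.mem_univ, true_and] using this
    -- the telescoped RHS equals y s - y t
    have htel : ∑ k ∈ Finset.range (n - 1), (g (k+1) - g k) *
        (if g k < y s ∧ ¬ (g k < y t) then (1:ℝ)
          else if g k < y t ∧ ¬ (g k < y s) then -1 else 0)
        = y s - y t := by
      have hpt : ∀ k ∈ Finset.range (n - 1),
          (g (k+1) - g k) * (if g k < y s ∧ ¬ (g k < y t) then (1:ℝ)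
            else if g k < y t ∧ ¬ (g k < y s) then -1 else 0)
          = (g (k+1) - g k) * (if g k < y s ∧ ¬ (g k < y v0) then (1:ℝ) else 0)
            - (g (k+1) - g k) * (if g k < y t ∧ ¬ (g k < y v0) then (1:ℝ) else 0) := by
        intro k hk
        rw [Finset.mem_range] at hk
        have hnv0 : ¬ (g k < y v0) := by
          rw [hv0]
          exact not_lt.2 (hmono 0 k (Nat.zero_le k) (by omega))
        by_cases h1 : g k < y s <;> by_cases h2 : g k < y t <;>
          simp [h1, h2, hnv0]
      rw [Finset.sum_congr rfl hpt, Finset.sum_sub_distrib,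
        ← layerSum' L hsort (y s) (y v0) (hmemL _) (hmemL _),
        ← layerSum' L hsort (y t) (y v0) (hmemL _) (hmemL _)]
      have h1 : y v0 ≤ y s := by rw [hv0]; exact hming _ (hmemL s)
      have h2 : y v0 ≤ y t := by rw [hv0]; exact hming _ (hmemL t)
      rw [max_eq_left (by linarith), max_eq_left (by linarith)]
      ring
    have : y s - y t ≤ gsep (netMap' A fstar) := by
      rw [hcalc, hlayer, ← htel]
      exact Finset.sum_le_sum hcut'
    linarith
end

section
/- Let X be a finite set, and let μ be a probability distribution on the set ℒ of strict linear orders on X. Define r(D, D∪{x}) = μ({≻ : y ≻ x for all y ∈ X∖(D∪x) and x ≻ z for all z ∈ D}) for each arc of the Boolean lattice. Then r is a nonnegative flow from ∅ to X: Σ_{x∈X} r(X∖x, X) = 1 and, for each D with 1 ≤ |D| ≤ |X|−1, Σ_{x∈D} r(D∖x, D) = Σ_{y∉D} r(D, D∪y). -/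
open Finset

variable {α : Type*} [Fintype α] [DecidableEq α]

/-- A strict linear order (ranking) on the finite set `α`. -/
def Ranking (α : Type*) [Fintype α] [DecidableEq α] : Type _ :=
  {r : α → α → Bool //
    (∀ x, ¬ r x x) ∧ (∀ x y z, r x y → r y z → r x z) ∧
    (∀ x y, x ≠ y → r x y ∨ r y x)}

instance : Fintype (Ranking α) := Subtype.fintype _

private lemma exists_top (q : α → α → Bool)
    (htrans : ∀ x y z, q x y → q y z → q x z)
    (htot : ∀ x y, x ≠ y → q x y ∨ q y x)
    (S : Finset α) (hS : S.Nonempty) :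
    ∃ x ∈ S, ∀ z ∈ S, z ≠ x → q x z := by
  classical
  induction S using Finset.induction_on with
  | empty => exact absurd hS (by simp)
  | @insert a s ha ih =>
    rcases s.eq_empty_or_nonempty with rfl | hs
    · exact ⟨a, by simp, by simp⟩
    · obtain ⟨x, hxs, hx⟩ := ih hs
      have hax : a ≠ x := fun h => ha (h ▸ hxs)
      by_cases hqa : q a x
      · refine ⟨a, Finset.mem_insert_self _ _, ?_⟩
        intro z hz hza
        rcases Finset.mem_insert.mp hz with rfl | hzs
        · exact absurd rfl hza
        · by_cases hzx : z = x
          · exact hzx ▸ hqa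
          · exact htrans a x z hqa (hx z hzs hzx)
      · have hqx : q x a := (htot a x hax).resolve_left hqa
        refine ⟨x, Finset.mem_insert_of_mem hxs, ?_⟩
        intro z hz hzx
        rcases Finset.mem_insert.mp hz with rfl | hzs
        · exact hqx
        · exact hx z hzs hzx

private lemma sum_ite_unique {s : Finset α} {P : α → Prop} [DecidablePred P] (c : ℝ)
    (huniq : ∀ x ∈ s, P x → ∀ y ∈ s, P y → x = y) :
    ∑ x ∈ s, (if P x then c else 0) = if ∃ x ∈ s, P x then c else 0 := by
  by_cases h : ∃ x ∈ s, P x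
  · obtain ⟨x0, hx0, hP0⟩ := h
    rw [if_pos ⟨x0, hx0, hP0⟩]
    rw [Finset.sum_eq_single_of_mem x0 hx0]
    · exact if_pos hP0
    · intro b hb hne
      exact if_neg (fun hPb => hne (huniq b hb hPb x0 hx0 hP0))
  · rw [if_neg h]
    apply Finset.sum_eq_zero
    intro x hx
    exact if_neg (fun hPx => h ⟨x, hx, hPx⟩)

/-- For a probability distribution `μ` on rankings, the flow on the arc
`(D, D ∪ {x})` given by
`r(D, D∪{x}) = μ({≻ : y ≻ x ∀ y ∈ X∖(D∪x), and x ≻ z ∀ z ∈ D})`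
is a nonnegative flow from `∅` to `X`. -/
theorem stmt_19 [Nonempty α] (μ : Ranking α → ℝ) (hμ0 : ∀ p, 0 ≤ μ p)
    (hμ1 : ∑ p : Ranking α, μ p = 1)
    (r : Finset α → α → ℝ)
    (hr : r = fun D x => ∑ p : Ranking α,
      if (∀ y, y ∉ D → y ≠ x → p.1 y x) ∧ (∀ z ∈ D, p.1 x z) then μ p else 0) :
    (∀ (D : Finset α) (x : α), 0 ≤ r D x) ∧
    (∑ x : α, r (Finset.univ \ {x}) x = 1) ∧
    (∀ D : Finset α, D.Nonempty → D ≠ Finset.univ →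
      ∑ x ∈ D, r (D \ {x}) x = ∑ y ∈ Dᶜ, r D y) := by
  classical
  subst hr
  refine ⟨?_, ?_, ?_⟩
  · intro D x
    exact Finset.sum_nonneg fun p _ => by split <;> simp [hμ0 p]
  · -- top arcs
    rw [Finset.sum_comm]
    rw [← hμ1]
    apply Finset.sum_congr rfl
    intro p _
    obtain ⟨hirr, htrans, htot⟩ := p.2
    have huniq : ∀ x ∈ (Finset.univ : Finset α),
        ((∀ y, y ∉ Finset.univ \ {x} → y ≠ x → p.1 y x) ∧
          (∀ z ∈ Finset.univ \ {x}, p.1 x z)) →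
        ∀ y ∈ (Finset.univ : Finset α),
        ((∀ y', y' ∉ Finset.univ \ {y} → y' ≠ y → p.1 y' y) ∧
          (∀ z ∈ Finset.univ \ {y}, p.1 y z)) → x = y := by
      intro x hx hPx y hy hPy
      by_contra hne
      have h1 : p.1 x y := hPx.2 y (by simp [Ne.symm hne])
      have h2 : p.1 y x := hPy.2 x (by simp [hne])
      exact hirr x (htrans x y x h1 h2)
    rw [sum_ite_unique (μ p) huniq, if_pos]
    obtain ⟨x0, _, hx0⟩ := exists_top p.1 htrans htot Finset.univ
      (Finset.univ_nonempty)
    refine ⟨x0, Finset.mem_univ _, ?_, ?_⟩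
    · intro y hy hyx; simp at hy; exact absurd hy hyx
    · intro z hz
      exact hx0 z (Finset.mem_univ _) (by simp at hz; exact hz)
  · -- conservation
    intro D hD hDu
    rw [Finset.sum_comm, Finset.sum_comm (s := Dᶜ)]
    apply Finset.sum_congr rfl
    intro p _
    obtain ⟨hirr, htrans, htot⟩ := p.2
    have u1 : ∀ x ∈ D, ((∀ y, y ∉ D \ {x} → y ≠ x → p.1 y x) ∧
        (∀ z ∈ D \ {x}, p.1 x z)) → ∀ y ∈ D, ((∀ y', y' ∉ D \ {y} → y' ≠ y → p.1 y' y) ∧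
        (∀ z ∈ D \ {y}, p.1 y z)) → x = y := by
      intro x hx hPx y hy hPy
      by_contra hne
      have h1 : p.1 x y := hPx.2 y (Finset.mem_sdiff.mpr ⟨hy, by simp [Ne.symm hne]⟩)
      have h2 : p.1 y x := hPy.2 x (Finset.mem_sdiff.mpr ⟨hx, by simp [hne]⟩)
      exact hirr x (htrans x y x h1 h2)
    have u2 : ∀ x ∈ Dᶜ, ((∀ y', y' ∉ D → y' ≠ x → p.1 y' x) ∧
        (∀ z ∈ D, p.1 x z)) → ∀ y ∈ Dᶜ, ((∀ y', y' ∉ D → y' ≠ y → p.1 y' y) ∧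
        (∀ z ∈ D, p.1 y z)) → x = y := by
      intro x hx hPx y hy hPy
      by_contra hne
      have h1 : p.1 x y := hPy.1 x (Finset.mem_compl.mp hx) hne
      have h2 : p.1 y x := hPx.1 y (Finset.mem_compl.mp hy) (Ne.symm hne)
      exact hirr x (htrans x y x h1 h2)
    rw [sum_ite_unique (μ p) u1, sum_ite_unique (μ p) u2]
    have hiff : (∃ x ∈ D, (∀ y, y ∉ D \ {x} → y ≠ x → p.1 y x) ∧
        (∀ z ∈ D \ {x}, p.1 x z)) ↔
        (∃ y ∈ Dᶜ, (∀ y', y' ∉ D → y' ≠ y → p.1 y' y) ∧ (∀ z ∈ D, p.1 y z)) := by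
      set L : Prop := ∀ z ∈ D, ∀ y, y ∉ D → p.1 y z with hL
      have iff1 : (∃ x ∈ D, (∀ y, y ∉ D \ {x} → y ≠ x → p.1 y x) ∧
          (∀ z ∈ D \ {x}, p.1 x z)) ↔ L := by
        constructor
        · rintro ⟨x, hxD, hA1, hA2⟩ z hzD y hyD
          have hyx : y ≠ x := fun h => hyD (h ▸ hxD)
          have hpy : p.1 y x := hA1 y (by simp [hyD]) hyx
          by_cases hzx : z = x
          · exact hzx ▸ hpy
          · exact htrans y x z hpy (hA2 z (Finset.mem_sdiff.mpr ⟨hzD, by simp [hzx]⟩))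
        · intro hLh
          obtain ⟨x0, hx0D, hx0⟩ := exists_top p.1 htrans htot D hD
          refine ⟨x0, hx0D, ?_, ?_⟩
          · intro y hy hyx
            have : y ∉ D := fun hyD => hy (Finset.mem_sdiff.mpr ⟨hyD, by simp [hyx]⟩)
            exact hLh x0 hx0D y this
          · intro z hz
            obtain ⟨hzD, hzx⟩ := Finset.mem_sdiff.mp hz
            exact hx0 z hzD (by simpa using hzx)
      have iff2 : (∃ y ∈ Dᶜ, (∀ y', y' ∉ D → y' ≠ y → p.1 y' y) ∧
          (∀ z ∈ D, p.1 y z)) ↔ L := by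
        constructor
        · rintro ⟨y, hyc, hB1, hB2⟩ z hzD y' hy'D
          by_cases hyy : y' = y
          · exact hyy ▸ hB2 z hzD
          · exact htrans y' y z (hB1 y' hy'D hyy) (hB2 z hzD)
        · intro hLh
          have hDc : (Dᶜ : Finset α).Nonempty := by
            rw [← Finset.card_pos, Finset.card_compl]
            have : D.card < Fintype.card α :=
              lt_of_le_of_ne (Finset.card_le_univ D)
                (fun h => hDu (Finset.eq_univ_of_card D h))
            omega
          obtain ⟨y0, hy0c, hy0⟩ := exists_top (fun a b => p.1 b a)
            (fun a b c h1 h2 => htrans c b a h2 h1)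
            (fun a b h => (htot b a (Ne.symm h)))
            Dᶜ hDc
          have hy0D : y0 ∉ D := Finset.mem_compl.mp hy0c
          refine ⟨y0, hy0c, ?_, ?_⟩
          · intro y' hy' hy'y
            exact hy0 y' (Finset.mem_compl.mpr hy') hy'y
          · intro z hzD
            exact hLh z hzD y0 hy0D
      exact iff1.trans iff2.symm
    simp only [hiff]
end
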